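/- Let M be a compact metric space, f : M → M Borel measurable, and K₁, K₂ nonempty compact f-invariant subsets with nonempty intersection. Then the basins of statistical attraction satisfy B(K₁ ∩ K₂) = B(K₁) ∩ B(K₂). -/

import Mathlib

open MeasureTheory Filter Metric Set
open scoped Classical ENNReal Topology

/-- Frequency of visits, up to time `n - 1`, of the orbit of `x` to the
`ε`-neighborhood of `K`: `(1/n) · #{0 ≤ j ≤ n−1 : dist(f^j(x), K) < ε}`. -/
noncomputable def visitFreq {M : Type*} [MetricSpace M] (f : M → M) (K : Set M) (ε : ℝ)
    (x : M) (n : ℕ) : ℝ :=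
  (((Finset.range n).filter (fun j => infDist (f^[j] x) K < ε)).card : ℝ) / n

/-- Basin of statistical attraction of `K`. -/
def statBasin {M : Type*} [MetricSpace M] (f : M → M) (K : Set M) : Set M :=
  {x | ∀ ε > 0, Tendsto (fun n => visitFreq f K ε x n) atTop (𝓝 1)}

/-- The auxiliary basin `B_ε(K) = {x : liminf_n (1/n)·#{j < n : dist(f^j(x),K) < ε} > 1 − ε}`. -/
def statBasinEps {M : Type*} [MetricSpace M] (f : M → M) (K : Set M) (ε : ℝ) : Set M :=
  {x | 1 - ε < atTop.liminf (fun n => visitFreq f K ε x n)}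

private lemma visitFreq_le_one {M : Type*} [MetricSpace M] (f : M → M) (K : Set M) (ε : ℝ)
    (x : M) (n : ℕ) : visitFreq f K ε x n ≤ 1 := by
  rcases Nat.eq_zero_or_pos n with h | h
  · simp [visitFreq, h]
  · rw [visitFreq, div_le_one (by exact_mod_cast h)]
    exact_mod_cast (Finset.card_filter_le _ _).trans_eq (Finset.card_range n)

private lemma visitFreq_mono {M : Type*} [MetricSpace M] (f : M → M) {K K' : Set M}
    {ε ε' : ℝ} (x : M) (n : ℕ)
    (h : ∀ y : M, infDist y K < ε → infDist y K' < ε') :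
    visitFreq f K ε x n ≤ visitFreq f K' ε' x n := by
  rcases Nat.eq_zero_or_pos n with h0 | h0
  · simp [visitFreq, h0]
  · unfold visitFreq
    rw [div_le_div_iff_of_pos_right (by exact_mod_cast h0)]
    refine Nat.cast_le.mpr (Finset.card_le_card fun j hj => ?_)
    rw [Finset.mem_filter] at hj ⊢
    exact ⟨hj.1, h _ hj.2⟩

/-- Key uniformity lemma: points simultaneously close to `K₁` and `K₂` are close
to `K₁ ∩ K₂`, by compactness. -/
private lemma key_lemma {M : Type*} [MetricSpace M] [CompactSpace M]
    {K₁ K₂ : Set M} (h₁c : IsCompact K₁) (h₂c : IsCompact K₂)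
    (h₁ne : K₁.Nonempty) (h₂ne : K₂.Nonempty)
    {ε : ℝ} (hε : 0 < ε) :
    ∃ δ > 0, ∀ y : M, infDist y K₁ < δ → infDist y K₂ < δ → infDist y (K₁ ∩ K₂) < ε := by
  by_contra hcon
  push_neg at hcon
  choose y hy1 hy2 hy3 using fun n : ℕ => hcon (1 / (n + 1)) (by positivity)
  obtain ⟨z, φ, hφ, hz⟩ := CompactSpace.tendsto_subseq y
  have hφn : Tendsto (fun n => (1 : ℝ) / (φ n + 1)) atTop (𝓝 0) :=
    tendsto_one_div_add_atTop_nhds_zero_nat.comp hφ.tendsto_atTop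
  have hmem : ∀ (K : Set M), IsClosed K → K.Nonempty →
      (∀ n : ℕ, infDist (y n) K < 1 / (n + 1)) → z ∈ K := by
    intro K hK hKne hyK
    rw [hK.mem_iff_infDist_zero hKne]
    have h1 : Tendsto (fun n => infDist (y (φ n)) K) atTop (𝓝 (infDist z K)) :=
      (continuous_infDist_pt K).continuousAt.tendsto.comp hz
    have h2 : Tendsto (fun n => infDist (y (φ n)) K) atTop (𝓝 0) :=
      squeeze_zero (fun n => infDist_nonneg) (fun n => (hyK (φ n)).le) hφn
    exact tendsto_nhds_unique h1 h2
  have hz1 : z ∈ K₁ := hmem K₁ h₁c.isClosed h₁ne hy1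
  have hz2 : z ∈ K₂ := hmem K₂ h₂c.isClosed h₂ne hy2
  have h1 : Tendsto (fun n => infDist (y (φ n)) (K₁ ∩ K₂)) atTop (𝓝 (infDist z (K₁ ∩ K₂))) :=
    (continuous_infDist_pt (K₁ ∩ K₂)).continuousAt.tendsto.comp hz
  have h2 : ε ≤ infDist z (K₁ ∩ K₂) :=
    le_of_tendsto_of_tendsto' tendsto_const_nhds h1 (fun n => hy3 (φ n))
  rw [infDist_zero_of_mem (Set.mem_inter hz1 hz2)] at h2
  linarith

/-- basins of statistical attraction satisfy
`B(K₁ ∩ K₂) = B(K₁) ∩ B(K₂)` for nonempty compact `f`-invariant sets with nonempty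
intersection. -/
theorem statBasin_inter {M : Type*} [MetricSpace M] [CompactSpace M]
    [MeasurableSpace M] [BorelSpace M] (f : M → M) (hf : Measurable f)
    (K₁ K₂ : Set M) (h₁ne : K₁.Nonempty) (h₂ne : K₂.Nonempty)
    (h₁c : IsCompact K₁) (h₂c : IsCompact K₂)
    (h₁inv : f ⁻¹' K₁ = K₁) (h₂inv : f ⁻¹' K₂ = K₂) (hne : (K₁ ∩ K₂).Nonempty) :
    statBasin f (K₁ ∩ K₂) = statBasin f K₁ ∩ statBasin f K₂ := by
  ext x
  simp only [Set.mem_inter_iff, statBasin, Set.mem_setOf_eq]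
  constructor
  · intro hx
    have easy : ∀ K : Set M, K₁ ∩ K₂ ⊆ K →
        ∀ ε > 0, Tendsto (fun n => visitFreq f K ε x n) atTop (𝓝 1) := by
      intro K hK ε hε
      refine tendsto_of_tendsto_of_tendsto_of_le_of_le (hx ε hε) tendsto_const_nhds
        (fun n => visitFreq_mono f x n ?_) (fun n => visitFreq_le_one f K ε x n)
      intro y hy
      exact (infDist_le_infDist_of_subset hK hne).trans_lt hy
    exact ⟨easy K₁ inter_subset_left, easy K₂ inter_subset_right⟩
  · rintro ⟨hx1, hx2⟩ ε hε
    obtain ⟨δ, hδ, hkey⟩ := key_lemma h₁c h₂c h₁ne h₂ne hε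
    have hg : Tendsto (fun n => visitFreq f K₁ δ x n + visitFreq f K₂ δ x n - 1)
        atTop (𝓝 1) := by
      have := ((hx1 δ hδ).add (hx2 δ hδ)).sub_const 1
      norm_num at this
      exact this
    refine tendsto_of_tendsto_of_tendsto_of_le_of_le hg tendsto_const_nhds
      (fun n => ?_) (fun n => visitFreq_le_one f _ ε x n)
    rcases Nat.eq_zero_or_pos n with h0 | h0
    · simp [visitFreq, h0]
    · have hn : (0 : ℝ) < n := by exact_mod_cast h0
      set A := (Finset.range n).filter (fun j => infDist (f^[j] x) K₁ < δ) with hA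
      set B := (Finset.range n).filter (fun j => infDist (f^[j] x) K₂ < δ) with hB
      set C := (Finset.range n).filter (fun j => infDist (f^[j] x) (K₁ ∩ K₂) < ε) with hC
      have hsub : A ∩ B ⊆ C := by
        intro j hj
        rw [Finset.mem_inter, hA, hB, Finset.mem_filter, Finset.mem_filter] at hj
        rw [hC, Finset.mem_filter]
        exact ⟨hj.1.1, hkey _ hj.1.2 hj.2.2⟩
      have hcard : A.card + B.card ≤ C.card + n := by
        have h3 := Finset.card_inter_add_card_union A B
        have h4 : (A ∩ B).card ≤ C.card := Finset.card_le_card hsub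
        have h5 : (A ∪ B).card ≤ n := by
          refine (Finset.card_le_card ?_).trans_eq (Finset.card_range n)
          exact Finset.union_subset (Finset.filter_subset _ _) (Finset.filter_subset _ _)
        omega
      have hcard' : (A.card : ℝ) + B.card ≤ C.card + n := by exact_mod_cast hcard
      show visitFreq f K₁ δ x n + visitFreq f K₂ δ x n - 1 ≤ visitFreq f (K₁ ∩ K₂) ε x n
      unfold visitFreq
      rw [← add_div, show (1 : ℝ) = (n : ℝ) / n from (div_self hn.ne').symm,
        div_sub_div_same, div_le_div_iff₀ hn hn]
      rw [← hA, ← hB, ← hC]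
      nlinarith [hcard', hn.le]
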